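/- Let E = EuclideanSpace ℝ (Fin 3), let 0 < r_i < r_o, let 𝒫_i, 𝒫_o, k, μ be real numbers with k > 0 and μ > 0, and define on the punctured space E \ {0} the transformed pressure 𝒫(x) = 𝒫_o + (𝒫_i − 𝒫_o) · (r_i r_o/(r_o − r_i)) · (‖x‖⁻¹ − r_o⁻¹) and the velocity u(x) = (k/μ) · (𝒫_i − 𝒫_o) · (r_i r_o/(r_o − r_i)) · (‖x‖⁻³ • x). Then: (i) 𝒫(x) = 𝒫_i whenever ‖x‖ = r_i and 𝒫(x) = 𝒫_o whenever ‖x‖ = r_o; (ii) for every x ≠ 0, 𝒫 is differentiable at x and u(x) = −(k/μ) • grad 𝒫(x); and (iii) for every x ≠ 0, the divergence of u at x vanishes, i.e., ∑ᵢ ⟨(fderiv ℝ u x)(eᵢ), eᵢ⟩ = 0. -/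

import Mathlib

open scoped RealInnerProductSpace


noncomputable section KlinkenbergAux

local notation "E3" => EuclideanSpace ℝ (Fin 3)

/-- Derivative of `y ↦ ⟪y,y⟫ ^ p` (real power) at a nonzero point. -/
lemma klink_hasFDerivAt_inner_rpow {x : E3} (hx : x ≠ 0) (p : ℝ) :
    HasFDerivAt (fun y : E3 => ⟪y, y⟫ ^ p)
      ((2 * p * (‖x‖ ^ 2) ^ (p - 1)) • innerSL ℝ x) x := by
  have hg : HasFDerivAt (fun y : E3 => ⟪y, y⟫)
      ((fderivInnerCLM ℝ (x, x)).comp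
        ((ContinuousLinearMap.id ℝ E3).prod (ContinuousLinearMap.id ℝ E3))) x :=
    (hasFDerivAt_id x).inner ℝ (hasFDerivAt_id x)
  have hne : ⟪x, x⟫ ≠ 0 := by
    rw [real_inner_self_eq_norm_sq]
    exact pow_ne_zero 2 (norm_ne_zero_iff.mpr hx)
  have h := hg.rpow_const (p := p) (Or.inl hne)
  refine h.congr_fderiv ?_
  ext v
  simp only [ContinuousLinearMap.smul_apply, ContinuousLinearMap.comp_apply,
    ContinuousLinearMap.prod_apply, ContinuousLinearMap.id_apply, fderivInnerCLM_apply,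
    innerSL_apply_apply, real_inner_self_eq_norm_sq, smul_eq_mul, real_inner_comm v x]
  ring

lemma klink_norm_pow_inv (y : E3) (n : ℕ) :
    ((‖y‖ : ℝ) ^ n)⁻¹ = (‖y‖ ^ 2 : ℝ) ^ (-(n : ℝ) / 2) := by
  rw [← Real.rpow_natCast ‖y‖ 2, ← Real.rpow_mul (norm_nonneg y),
    ← Real.rpow_natCast ‖y‖ n, ← Real.rpow_neg (norm_nonneg y)]
  congr 1
  push_cast
  ring

lemma klink_inner_rpow_eq (y : E3) (n : ℕ) :
    ((‖y‖ : ℝ) ^ n)⁻¹ = ⟪y, y⟫ ^ (-(n : ℝ) / 2) := by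
  rw [real_inner_self_eq_norm_sq]; exact klink_norm_pow_inv y n

end KlinkenbergAux

/-- Analytical solution of the Hopf–Cole–transformed Klinkenberg model for gas flow
between concentric spheres: the transformed pressure
`𝒫 x = 𝒫ₒ + (𝒫ᵢ − 𝒫ₒ)(rᵢ rₒ/(rₒ − rᵢ))(‖x‖⁻¹ − rₒ⁻¹)` and the velocity
`u x = (k/μ)(𝒫ᵢ − 𝒫ₒ)(rᵢ rₒ/(rₒ − rᵢ)) • (‖x‖⁻³ • x)` satisfy (i) the prescribed
boundary values, (ii) the Darcy relation `u = −(k/μ) grad 𝒫` away from the origin, and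
(iii) `div u = 0` away from the origin. -/
theorem concentric_spheres_analytical_solution (ri ro : ℝ) (hri : 0 < ri) (hio : ri < ro)
    (Pin Pout k μ : ℝ) (hk : 0 < k) (hμ : 0 < μ)
    (P : EuclideanSpace ℝ (Fin 3) → ℝ)
    (hPdef : ∀ x, P x = Pout + (Pin - Pout) * (ri * ro / (ro - ri)) * (‖x‖⁻¹ - ro⁻¹))
    (u : EuclideanSpace ℝ (Fin 3) → EuclideanSpace ℝ (Fin 3))
    (hudef : ∀ x, u x = ((k / μ) * (Pin - Pout) * (ri * ro / (ro - ri))) •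
      ((‖x‖ ^ 3)⁻¹ • x)) :
    (∀ x : EuclideanSpace ℝ (Fin 3), ‖x‖ = ri → P x = Pin) ∧
    (∀ x : EuclideanSpace ℝ (Fin 3), ‖x‖ = ro → P x = Pout) ∧
    (∀ x : EuclideanSpace ℝ (Fin 3), x ≠ 0 →
      DifferentiableAt ℝ P x ∧ u x = (-(k / μ)) • gradient P x) ∧
    (∀ x : EuclideanSpace ℝ (Fin 3), x ≠ 0 →
      DifferentiableAt ℝ u x ∧
      ∑ i : Fin 3, ⟪fderiv ℝ u x (EuclideanSpace.single i (1 : ℝ)),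
        EuclideanSpace.single i (1 : ℝ)⟫ = 0) := by
  have hri' : ri ≠ 0 := hri.ne'
  have hro' : ro ≠ 0 := (hri.trans hio).ne'
  have hoi : ro - ri ≠ 0 := sub_ne_zero.mpr hio.ne'
  refine ⟨?_, ?_, ?_, ?_⟩
  · intro x hx
    rw [hPdef, hx]
    field_simp
    ring
  · intro x hx
    rw [hPdef, hx]
    field_simp
    ring
  · -- Darcy relation
    intro x hx
    have ht : (0 : ℝ) < ‖x‖ ^ 2 := pow_pos (norm_pos_iff.mpr hx) 2
    have hP1 := klink_hasFDerivAt_inner_rpow hx (-(1 : ℝ) / 2)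
    have hPeq : (fun y : EuclideanSpace ℝ (Fin 3) =>
        Pout + (Pin - Pout) * (ri * ro / (ro - ri)) * (⟪y, y⟫ ^ (-(1 : ℝ) / 2) - ro⁻¹)) = P := by
      funext y
      rw [hPdef y]
      have h1 := klink_inner_rpow_eq y 1
      rw [pow_one] at h1
      push_cast at h1
      rw [h1]
    have hPd := ((hP1.sub_const ro⁻¹).const_mul
      ((Pin - Pout) * (ri * ro / (ro - ri)))).const_add Pout
    rw [hPeq] at hPd
    have hgrad : HasGradientAt P
        (((Pin - Pout) * (ri * ro / (ro - ri)) *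
          (2 * (-(1 : ℝ) / 2) * (‖x‖ ^ 2) ^ ((-(1 : ℝ) / 2) - 1))) • x) x := by
      rw [hasGradientAt_iff_hasFDerivAt]
      refine hPd.congr_fderiv ?_
      ext v
      simp only [InnerProductSpace.toDual_apply_apply, ContinuousLinearMap.smul_apply,
        innerSL_apply_apply, smul_eq_mul, real_inner_smul_left]
      ring
    refine ⟨hPd.differentiableAt, ?_⟩
    rw [hudef x, hgrad.gradient, smul_smul, smul_smul]
    congr 1
    have e2 := klink_norm_pow_inv x 3
    push_cast at e2
    rw [e2]
    have e1 : ((-(1 : ℝ) / 2) - 1) = -(3 : ℝ) / 2 := by norm_num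
    rw [e1]
    ring
  · -- divergence-free
    intro x hx
    have ht : (0 : ℝ) < ‖x‖ ^ 2 := pow_pos (norm_pos_iff.mpr hx) 2
    have h3 := klink_hasFDerivAt_inner_rpow hx (-(3 : ℝ) / 2)
    have hsm := h3.smul (hasFDerivAt_id x)
    have hud := hsm.const_smul ((k / μ) * (Pin - Pout) * (ri * ro / (ro - ri)))
    have hueq : (fun y : EuclideanSpace ℝ (Fin 3) =>
        ((k / μ) * (Pin - Pout) * (ri * ro / (ro - ri))) •
          (⟪y, y⟫ ^ (-(3 : ℝ) / 2) • y)) = u := by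
      funext y
      rw [hudef y]
      have h1 := klink_inner_rpow_eq y 3
      push_cast at h1
      rw [h1]
    simp only [id_eq] at hud
    change HasFDerivAt (fun y : EuclideanSpace ℝ (Fin 3) => ((k / μ) * (Pin - Pout) * (ri * ro / (ro - ri))) •
        (⟪y, y⟫ ^ (-(3 : ℝ) / 2) • y)) _ x at hud
    rw [hueq] at hud
    refine ⟨hud.differentiableAt, ?_⟩
    rw [hud.fderiv]
    have key : (‖x‖ ^ 2 : ℝ) ^ ((-(3 : ℝ) / 2) - 1) * ‖x‖ ^ 2
        = (‖x‖ ^ 2 : ℝ) ^ (-(3 : ℝ) / 2) := by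
      calc (‖x‖ ^ 2 : ℝ) ^ ((-(3 : ℝ) / 2) - 1) * ‖x‖ ^ 2
          = (‖x‖ ^ 2 : ℝ) ^ ((-(3 : ℝ) / 2) - 1) * (‖x‖ ^ 2 : ℝ) ^ (1 : ℝ) := by
            rw [Real.rpow_one]
        _ = (‖x‖ ^ 2 : ℝ) ^ (-(3 : ℝ) / 2) := by
            rw [← Real.rpow_add ht]; norm_num
    have hxx : x 0 * x 0 + x 1 * x 1 + x 2 * x 2 = ‖x‖ ^ 2 := by
      rw [← real_inner_self_eq_norm_sq]
      simp only [PiLp.inner_apply, RCLike.inner_apply, Fin.sum_univ_three, conj_trivial]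
    have hinner : ⟪x, x⟫ = ‖x‖ ^ 2 := real_inner_self_eq_norm_sq x
    simp only [ContinuousLinearMap.smul_apply, ContinuousLinearMap.add_apply,
      ContinuousLinearMap.smulRight_apply, ContinuousLinearMap.id_apply, innerSL_apply_apply,
      real_inner_smul_left, inner_add_left, smul_eq_mul,
      EuclideanSpace.inner_single_left, EuclideanSpace.inner_single_right,
      EuclideanSpace.single_apply, hinner, Fin.sum_univ_three, PiLp.add_apply,
      PiLp.smul_apply]
    simp only [map_one, one_mul, if_true, conj_trivial]
    linear_combination ((-3) * ((k / μ) * (Pin - Pout) * (ri * ro / (ro - ri))) *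
        ((‖x‖ ^ 2 : ℝ) ^ ((-(3 : ℝ) / 2) - 1))) * hxx +
      ((-3) * ((k / μ) * (Pin - Pout) * (ri * ro / (ro - ri)))) * key
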